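/- Pythagorean theorem for rotation groups: let V be a three-dimensional real vector space with a rotation group D, and let v, w ∈ V be perpendicular in the sense that some rotation fixes v and sends w to -w. If v, w and v + w are carried by rotations to a·n, b·n and c·n respectively for some fixed vector n ≠ 0 and nonnegative reals a, b, c, then a² + b² = c². -/
import Mathlib


/-- The ray (half-line) spanned by `v`: all nonnegative multiples of `v`. -/
def Ray' {V : Type*} [AddCommGroup V] [Module ℝ V] (v : V) : Set V :=
  {x | ∃ c : ℝ, 0 ≤ c ∧ x = c • v}

/-- The half-plane `ℝ v + ℝ≥0 w`. -/
def HalfPlane {V : Type*} [AddCommGroup V] [Module ℝ V] (v w : V) : Set V :=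
  {x | ∃ a b : ℝ, 0 ≤ b ∧ x = a • v + b • w}

/-- `D` is a rotation group: for any two pairs of (half-plane, ray on its boundary)
there is exactly one element of `D` mapping the first pair to the second. -/
def IsRotationGroup {V : Type*} [AddCommGroup V] [Module ℝ V]
    (D : Subgroup (V ≃ₗ[ℝ] V)) : Prop :=
  ∀ v w v' w' : V, LinearIndependent ℝ ![v, w] → LinearIndependent ℝ ![v', w'] →
    ∃! d : V ≃ₗ[ℝ] V, d ∈ D ∧
      (d : V ≃ₗ[ℝ] V) '' HalfPlane v w = HalfPlane v' w' ∧
      (d : V ≃ₗ[ℝ] V) '' Ray' v = Ray' v'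

/-- `w ⊥ v` : some rotation sends `w` to `-w` and fixes `v`. -/
def Perp {V : Type*} [AddCommGroup V] [Module ℝ V]
    (D : Subgroup (V ≃ₗ[ℝ] V)) (w v : V) : Prop :=
  ∃ r ∈ D, r w = -w ∧ r v = v

namespace RotPyth
open Module


variable {V : Type*} [AddCommGroup V] [Module ℝ V]

lemma mul_apply (f g : V ≃ₗ[ℝ] V) (x : V) : (f * g) x = f (g x) := rfl

lemma one_apply (x : V) : (1 : V ≃ₗ[ℝ] V) x = x := rfl

lemma mem_ray_self (v : V) : v ∈ Ray' v := ⟨1, zero_le_one, (one_smul ℝ v).symm⟩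

lemma smul_mem_ray (v : V) {c : ℝ} (hc : 0 ≤ c) : c • v ∈ Ray' v := ⟨c, hc, rfl⟩

lemma mem_halfPlane (v w : V) (a : ℝ) {b : ℝ} (hb : 0 ≤ b) : a • v + b • w ∈ HalfPlane v w :=
  ⟨a, b, hb, rfl⟩

lemma mem_halfPlane_self₂ (v w : V) : w ∈ HalfPlane v w :=
  ⟨0, 1, zero_le_one, by simp⟩

lemma image_Ray (d : V ≃ₗ[ℝ] V) (v : V) : d '' Ray' v = Ray' (d v) := by
  ext x
  constructor
  · rintro ⟨y, ⟨c, hc, rfl⟩, rfl⟩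
    exact ⟨c, hc, by simp⟩
  · rintro ⟨c, hc, rfl⟩
    exact ⟨c • v, ⟨c, hc, rfl⟩, by simp⟩

lemma image_HalfPlane (d : V ≃ₗ[ℝ] V) (v w : V) :
    d '' HalfPlane v w = HalfPlane (d v) (d w) := by
  ext x
  constructor
  · rintro ⟨y, ⟨a, b, hb, rfl⟩, rfl⟩
    exact ⟨a, b, hb, by simp⟩
  · rintro ⟨a, b, hb, rfl⟩
    exact ⟨a • v + b • w, ⟨a, b, hb, rfl⟩, by simp⟩

lemma ray_smul {τ : ℝ} (hτ : 0 < τ) (v : V) : Ray' (τ • v) = Ray' v := by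
  ext x
  constructor
  · rintro ⟨c, hc, rfl⟩
    exact ⟨c * τ, mul_nonneg hc hτ.le, (mul_smul c τ v).symm⟩
  · rintro ⟨c, hc, rfl⟩
    exact ⟨c / τ, div_nonneg hc hτ.le, by rw [smul_smul, div_mul_cancel₀ _ hτ.ne']⟩

lemma halfPlane_smul₁ {σ : ℝ} (hσ : σ ≠ 0) (v w : V) : HalfPlane (σ • v) w = HalfPlane v w := by
  ext x
  constructor
  · rintro ⟨a, b, hb, rfl⟩
    exact ⟨a * σ, b, hb, by rw [mul_smul]⟩
  · rintro ⟨a, b, hb, rfl⟩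
    exact ⟨a / σ, b, hb, by rw [smul_smul, div_mul_cancel₀ _ hσ]⟩

lemma halfPlane_smul₂ {μ : ℝ} (hμ : 0 < μ) (v w : V) : HalfPlane v (μ • w) = HalfPlane v w := by
  ext x
  constructor
  · rintro ⟨a, b, hb, rfl⟩
    exact ⟨a, b * μ, mul_nonneg hb hμ.le, by rw [mul_smul]⟩
  · rintro ⟨a, b, hb, rfl⟩
    exact ⟨a, b / μ, div_nonneg hb hμ.le, by rw [smul_smul, div_mul_cancel₀ _ hμ.ne']⟩

lemma halfPlane_shear (t : ℝ) (v w : V) : HalfPlane v (w + t • v) = HalfPlane v w := by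
  ext x
  constructor
  · rintro ⟨a, b, hb, rfl⟩
    exact ⟨a + b * t, b, hb, by rw [smul_add, smul_smul]; module⟩
  · rintro ⟨a, b, hb, rfl⟩
    exact ⟨a - b * t, b, hb, by rw [smul_add, smul_smul]; module⟩

/-- the form of the half-plane image we always meet : `d v = σ • v'`, `d w = t • v' + μ • w'`. -/
lemma halfPlane_eq {σ μ t : ℝ} (hσ : σ ≠ 0) (hμ : 0 < μ) (v' w' : V) :
    HalfPlane (σ • v') (μ • w' + t • v') = HalfPlane v' w' := by
  rw [show μ • w' + t • v' = (μ • w' + (t/σ) • (σ • v')) by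
        rw [smul_smul, div_mul_cancel₀ _ hσ],
     show (μ • w' + (t/σ) • σ • v') = ((μ:ℝ) • w') + (t/σ) • (σ • v') from rfl]
  rw [halfPlane_shear (t/σ) (σ • v') (μ • w'), halfPlane_smul₁ hσ, halfPlane_smul₂ hμ]


lemma pair_iff {x y : V} :
    LinearIndependent ℝ ![x, y] ↔ ∀ s t : ℝ, s • x + t • y = 0 → s = 0 ∧ t = 0 :=
  LinearIndependent.pair_iff

lemma ind_swap {x y : V} (h : LinearIndependent ℝ ![x, y]) : LinearIndependent ℝ ![y, x] := by
  rw [pair_iff] at h ⊢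
  intro s t hst
  have := h t s (by rw [← hst]; abel)
  exact ⟨this.2, this.1⟩

lemma ind_neg₂ {x y : V} (h : LinearIndependent ℝ ![x, y]) : LinearIndependent ℝ ![x, -y] := by
  rw [pair_iff] at h ⊢
  intro s t hst
  have := h s (-t) (by rw [← hst]; module)
  exact ⟨this.1, by simpa using this.2⟩

lemma ind_ne_zero₁ {x y : V} (h : LinearIndependent ℝ ![x, y]) : x ≠ 0 := by
  intro hx
  have := (pair_iff.1 h 1 0 (by simp [hx])).1
  norm_num at this

lemma ind_ne_zero₂ {x y : V} (h : LinearIndependent ℝ ![x, y]) : y ≠ 0 :=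
  ind_ne_zero₁ (ind_swap h)

lemma smul_coeff_inj {x : V} (hx : x ≠ 0) {s t : ℝ} (h : s • x = t • x) : s = t := by
  have : (s - t) • x = 0 := by rw [sub_smul, h, sub_self]
  rcases smul_eq_zero.1 this with h' | h'
  · linarith [sub_eq_zero.1 (by linarith : s - t = (0:ℝ))]
  · exact absurd h' hx



variable {D : Subgroup (V ≃ₗ[ℝ] V)}


/-- A `d ∈ D` which fixes a flag is the identity. -/
lemma flag_rigid (hD : IsRotationGroup D) {v w : V} (hind : LinearIndependent ℝ ![v, w])
    {d : V ≃ₗ[ℝ] V} (hd : d ∈ D) {σ μ t : ℝ} (hσ : 0 < σ) (hμ : 0 < μ)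
    (hv : d v = σ • v) (hw : d w = μ • w + t • v) : d = 1 := by
  obtain ⟨u, -, hu⟩ := hD v w v w hind hind
  have h1 : (1 : V ≃ₗ[ℝ] V) = u := by
    apply hu
    refine ⟨one_mem D, ?_, ?_⟩ <;> simp [image_HalfPlane, image_Ray, LinearEquiv.coe_one]
  have h2 : d = u := by
    apply hu
    refine ⟨hd, ?_, ?_⟩
    · rw [image_HalfPlane, hv, hw, halfPlane_eq hσ.ne' hμ]
    · rw [image_Ray, hv, ray_smul hσ]
  rw [h2, ← h1]

/-- Half-turn about `x`. -/
def IsHT (D : Subgroup (V ≃ₗ[ℝ] V)) (x : V) (h : V ≃ₗ[ℝ] V) : Prop :=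
  h ∈ D ∧ h * h = 1 ∧ x ≠ 0 ∧ h x = x ∧ ∀ z : V, ∃ t : ℝ, h z + z = t • x

lemma IsHT.mem {x : V} {h : V ≃ₗ[ℝ] V} (H : IsHT D x h) : h ∈ D := H.1
lemma IsHT.sq {x : V} {h : V ≃ₗ[ℝ] V} (H : IsHT D x h) : h * h = 1 := H.2.1
lemma IsHT.ne {x : V} {h : V ≃ₗ[ℝ] V} (H : IsHT D x h) : x ≠ 0 := H.2.2.1
lemma IsHT.fix {x : V} {h : V ≃ₗ[ℝ] V} (H : IsHT D x h) : h x = x := H.2.2.2.1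
lemma IsHT.coeff {x : V} {h : V ≃ₗ[ℝ] V} (H : IsHT D x h) (z : V) :
    ∃ t : ℝ, h z + z = t • x := H.2.2.2.2 z

lemma IsHT.apply_apply {x : V} {h : V ≃ₗ[ℝ] V} (H : IsHT D x h) (z : V) : h (h z) = z := by
  have := congrArg (fun (e : V ≃ₗ[ℝ] V) => e z) H.sq
  simpa [mul_apply] using this

lemma IsHT.inv_eq {x : V} {h : V ≃ₗ[ℝ] V} (H : IsHT D x h) : h⁻¹ = h :=
  inv_eq_of_mul_eq_one_right H.sq

lemma ind_of_notMem_span {x y : V} (hx : x ≠ 0)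
    (hy : y ∉ (Submodule.span ℝ {x} : Submodule ℝ V)) : LinearIndependent ℝ ![x, y] := by
  refine pair_iff.2 fun s t hst => ?_
  by_cases ht : t = 0
  · subst ht
    simp only [zero_smul, add_zero] at hst
    rcases smul_eq_zero.1 hst with h' | h'
    · exact ⟨h', rfl⟩
    · exact absurd h' hx
  · exfalso
    apply hy
    have hyx : y = (-s/t) • x := by
      have h2 : t • y = (-s) • x := by
        have h4 : t • y = -(s • x) := by linear_combination (norm := module) hst
        rw [h4, neg_smul]
      have h3 := congrArg (fun u => (t⁻¹ : ℝ) • u) h2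
      simp only [smul_smul, inv_mul_cancel₀ ht, one_smul] at h3
      rw [h3]
      congr 1
      field_simp
    rw [hyx]
    exact Submodule.smul_mem _ _ (Submodule.mem_span_singleton_self x)

lemma exists_ind_of_ne (hdim : Module.finrank ℝ V = 3) {x : V} (hx : x ≠ 0) :
    ∃ y : V, LinearIndependent ℝ ![x, y] := by
  haveI : FiniteDimensional ℝ V := .of_finrank_pos (by omega)
  have hne : ∃ y, y ∉ (Submodule.span ℝ {x} : Submodule ℝ V) := by
    by_contra hco
    push_neg at hco
    have htop : (Submodule.span ℝ {x} : Submodule ℝ V) = ⊤ := Submodule.eq_top_iff'.2 hco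
    have h1 := finrank_span_singleton (K := ℝ) hx
    rw [htop, finrank_top] at h1
    omega
  obtain ⟨y, hy⟩ := hne
  exact ⟨y, ind_of_notMem_span hx hy⟩

lemma inv_apply (g : V ≃ₗ[ℝ] V) (x : V) : g⁻¹ x = g.symm x := rfl

lemma inv_apply_apply (g : V ≃ₗ[ℝ] V) (x : V) : g⁻¹ (g x) = x := g.symm_apply_apply x

lemma apply_inv_apply (g : V ≃ₗ[ℝ] V) (x : V) : g (g⁻¹ x) = x := g.apply_symm_apply x

/-- A fixed vector of a non-identity element of `D` fixing `x ≠ 0` lies on the line of `x`. -/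
lemma fixed_in_span (hD : IsRotationGroup D) {h : V ≃ₗ[ℝ] V} (hmem : h ∈ D) (hne : h ≠ 1)
    {x : V} (hx : x ≠ 0) (hfix : h x = x) {u : V} (hu : h u = u) : ∃ t : ℝ, u = t • x := by
  by_cases hus : u ∈ (Submodule.span ℝ {x} : Submodule ℝ V)
  · obtain ⟨t, ht⟩ := Submodule.mem_span_singleton.1 hus
    exact ⟨t, ht.symm⟩
  · exfalso
    apply hne
    have hind := ind_of_notMem_span hx hus
    refine flag_rigid hD hind hmem (σ := 1) (μ := 1) (t := 0) one_pos one_pos ?_ ?_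
    · rw [hfix, one_smul]
    · rw [hu, one_smul, zero_smul, add_zero]

lemma isHT_exists (hD : IsRotationGroup D) (hdim : Module.finrank ℝ V = 3)
    {x : V} (hx : x ≠ 0) : ∃ h : V ≃ₗ[ℝ] V, IsHT D x h := by
  obtain ⟨y, hind⟩ := exists_ind_of_ne hdim hx
  obtain ⟨h, ⟨hmem, hH, hR⟩, -⟩ := hD x y x (-y) hind (ind_neg₂ hind)
  -- h x = σ • x with σ > 0
  have hxx : h x ∈ Ray' x := by
    rw [← hR]; exact Set.mem_image_of_mem _ (mem_ray_self x)
  obtain ⟨σ, hσ0, hσ⟩ := hxx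
  have hσpos : 0 < σ := by
    rcases hσ0.lt_or_eq with h' | h'
    · exact h'
    · exfalso; apply hx
      have : h x = 0 := by rw [hσ, ← h', zero_smul]
      exact (LinearEquiv.map_eq_zero_iff h).1 this
  -- h y = α • x - β • y with β > 0
  have hyy : h y ∈ HalfPlane x (-y) := by
    rw [← hH]; exact Set.mem_image_of_mem _ (mem_halfPlane_self₂ x y)
  obtain ⟨α, β, hβ0, hβ⟩ := hyy
  have hβpos : 0 < β := by
    rcases hβ0.lt_or_eq with h' | h'
    · exact h'
    · exfalso
      have h1 : h y = h ((α / σ) • x) := by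
        rw [hβ, ← h', map_smul, hσ, smul_smul, div_mul_cancel₀ _ hσpos.ne']
        simp
      have h2 : y = (α / σ) • x := h.injective h1
      have := (pair_iff.1 hind (α / σ) (-1) (by rw [neg_one_smul, ← h2]; abel)).2
      norm_num at this
  have hhy : h y = α • x - β • y := by rw [hβ]; module
  -- h is an involution
  have hsq : h * h = 1 := by
    refine flag_rigid hD hind (mul_mem hmem hmem) (σ := σ * σ) (μ := β * β)
      (t := α * σ - β * α) (mul_pos hσpos hσpos) (mul_pos hβpos hβpos) ?_ ?_
    · rw [mul_apply, hσ, map_smul, hσ, smul_smul]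
    · rw [mul_apply, hhy, map_sub, map_smul, map_smul, hσ, hhy]
      module
  have hfix : h x = x := by
    have h1 : (h * h) x = (σ * σ) • x := by rw [mul_apply, hσ, map_smul, hσ, smul_smul]
    rw [hsq] at h1
    have : (1:ℝ) • x = (σ * σ) • x := by rw [one_smul]; exact h1.symm ▸ rfl
    have hσ1 : σ = 1 := by
      have := smul_coeff_inj hx (t := σ * σ) (s := (1:ℝ)) (by rw [one_smul, ← h1]; rfl)
      nlinarith
    rw [hσ, hσ1, one_smul]
  have hne1 : h ≠ 1 := by
    intro h1
    have : y = α • x - β • y := by rw [← hhy, h1]; rfl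
    have := (pair_iff.1 hind (-α) (1 + β) (by linear_combination (norm := module) this)).2
    linarith
  refine ⟨h, hmem, hsq, hx, hfix, fun z => ?_⟩
  have happ : h (h z) = z := by
    have := congrArg (fun (e : V ≃ₗ[ℝ] V) => e z) hsq
    simpa [mul_apply] using this
  have hfixu : h (h z + z) = h z + z := by rw [map_add, happ]; abel
  obtain ⟨t, ht⟩ := fixed_in_span hD hmem hne1 hx hfix hfixu
  exact ⟨t, ht⟩

lemma isHT_ne_one (hdim : Module.finrank ℝ V = 3) {x : V} {h : V ≃ₗ[ℝ] V}
    (H : IsHT D x h) : h ≠ 1 := by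
  intro h1
  obtain ⟨y, hind⟩ := exists_ind_of_ne hdim H.ne
  obtain ⟨t, ht⟩ := H.coeff y
  rw [h1] at ht
  have h2 : y + y = t • x := ht
  have := (pair_iff.1 hind (-t) 2 (by linear_combination (norm := module) h2)).2
  norm_num at this

lemma isHT_of_inv (hD : IsRotationGroup D) {h : V ≃ₗ[ℝ] V} (hmem : h ∈ D) (hsq : h * h = 1)
    (hne : h ≠ 1) {x : V} (hx : x ≠ 0) (hfix : h x = x) : IsHT D x h := by
  refine ⟨hmem, hsq, hx, hfix, fun z => ?_⟩
  have happ : h (h z) = z := by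
    have := congrArg (fun (e : V ≃ₗ[ℝ] V) => e z) hsq
    simpa [mul_apply] using this
  have hfixu : h (h z + z) = h z + z := by rw [map_add, happ]; abel
  exact fixed_in_span hD hmem hne hx hfix hfixu

lemma isHT_smul {x : V} {h : V ≃ₗ[ℝ] V} (H : IsHT D x h) {σ : ℝ} (hσ : σ ≠ 0) :
    IsHT D (σ • x) h := by
  refine ⟨H.mem, H.sq, smul_ne_zero hσ H.ne, by rw [map_smul, H.fix], fun z => ?_⟩
  obtain ⟨t, ht⟩ := H.coeff z
  exact ⟨t / σ, by rw [ht, smul_smul, div_mul_cancel₀ _ hσ]⟩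

lemma isHT_conj (hD : IsRotationGroup D) {x : V} {h : V ≃ₗ[ℝ] V} (H : IsHT D x h)
    {g : V ≃ₗ[ℝ] V} (hg : g ∈ D) : IsHT D (g x) (g * h * g⁻¹) := by
  refine ⟨mul_mem (mul_mem hg H.mem) (inv_mem hg), ?_,
    fun h0 => H.ne ((LinearEquiv.map_eq_zero_iff g).1 h0), ?_, fun z => ?_⟩
  · have : g * h * g⁻¹ * (g * h * g⁻¹) = g * (h * h) * g⁻¹ := by group
    rw [this, H.sq, mul_one, mul_inv_cancel]
  · show (g * h * g⁻¹) (g x) = g x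
    rw [mul_apply, mul_apply, inv_apply_apply, H.fix]
  · obtain ⟨t, ht⟩ := H.coeff (g⁻¹ z)
    refine ⟨t, ?_⟩
    have := congrArg g ht
    rw [map_add, map_smul, apply_inv_apply] at this
    rw [← this]
    rfl

lemma isHT_unique (hD : IsRotationGroup D) (hdim : Module.finrank ℝ V = 3)
    {x : V} {h h' : V ≃ₗ[ℝ] V} (H : IsHT D x h) (H' : IsHT D x h') : h = h' := by
  obtain ⟨y, hind⟩ := exists_ind_of_ne hdim H.ne
  have key : ∀ k : V ≃ₗ[ℝ] V, IsHT D x k →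
      k ∈ D ∧ k '' HalfPlane x y = HalfPlane x (-y) ∧ k '' Ray' x = Ray' x := by
    intro k K
    obtain ⟨t, ht⟩ := K.coeff y
    have hky : k y = (1:ℝ) • (-y) + t • x := by
      have : k y = t • x - y := by rw [← ht]; abel
      rw [this]; module
    refine ⟨K.mem, ?_, ?_⟩
    · rw [image_HalfPlane, hky, show k x = (1:ℝ) • x by rw [K.fix, one_smul],
        halfPlane_eq one_ne_zero one_pos]
    · rw [image_Ray, K.fix]
  obtain ⟨u, -, hu⟩ := hD x y x (-y) hind (ind_neg₂ hind)
  rw [hu h (key h H), hu h' (key h' H')]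

lemma perp_symm (hD : IsRotationGroup D) (hdim : Module.finrank ℝ V = 3)
    {x y : V} {h k : V ≃ₗ[ℝ] V} (Hx : IsHT D x h) (Hy : IsHT D y k)
    (hxy : h y = -y) : k x = -x := by
  have h1 : IsHT D (-y) (h * k * h⁻¹) := by
    have := isHT_conj hD Hy Hx.mem
    rwa [hxy] at this
  have h2 : IsHT D (-y) k := by
    have := isHT_smul Hy (σ := -1) (by norm_num)
    rwa [neg_one_smul] at this
  have heq : h * k * h⁻¹ = k := isHT_unique hD hdim h1 h2
  have hcomm : ∀ z, h (k z) = k (h z) := by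
    intro z
    have := congrArg (fun (e : V ≃ₗ[ℝ] V) => e (h z)) heq
    simp only [mul_apply] at this
    rw [inv_apply_apply] at this
    exact this
  obtain ⟨t, ht⟩ := Hy.coeff x
  have h3 : h (k x) + h x = t • (h y) := by rw [← map_add, ht, map_smul]
  rw [hcomm, Hx.fix, hxy] at h3
  have h4 : k x + x = (-t) • y := by rw [h3]; module
  have ht0 : t = 0 := by
    have := smul_coeff_inj Hy.ne (s := t) (t := -t) (by rw [← ht, ← h4])
    linarith
  rw [ht0, zero_smul] at ht
  linear_combination (norm := module) ht

/-- linear independence of a fixed vector and a negated vector of an involution-like map -/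
lemma ind_of_fix_neg {h : V ≃ₗ[ℝ] V} {x y : V} (hx : x ≠ 0) (hy : y ≠ 0)
    (hfix : h x = x) (hneg : h y = -y) : LinearIndependent ℝ ![x, y] := by
  refine pair_iff.2 fun s t hst => ?_
  have h2 : s • x - t • y = 0 := by
    have := congrArg h hst
    rw [map_add, map_smul, map_smul, hfix, hneg, map_zero] at this
    linear_combination (norm := module) this
  have hs : s • x = 0 := by linear_combination (norm := module) (1/2 : ℝ) • (hst + h2)
  have hts : t • y = 0 := by linear_combination (norm := module) hst - hs
  constructor
  · rcases smul_eq_zero.1 hs with h' | h'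
    · exact h'
    · exact absurd h' hx
  · rcases smul_eq_zero.1 hts with h' | h'
    · exact h'
    · exact absurd h' hy

/-- a 2x2 map with negative determinant has an eigenvector with positive eigenvalue -/
lemma eig2 {e₁ e₂ : V} (hind : LinearIndependent ℝ ![e₁, e₂]) (f : V ≃ₗ[ℝ] V)
    {A B C E : ℝ} (h1 : f e₁ = A • e₁ + C • e₂) (h2 : f e₂ = B • e₁ + E • e₂)
    (hdet : A * E - B * C < 0) :
    ∃ p q μ : ℝ, 0 < μ ∧ f (p • e₁ + q • e₂) = μ • (p • e₁ + q • e₂) ∧ ¬(p = 0 ∧ q = 0) := by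
  by_cases hB : B = 0
  · subst hB
    have hAE : A * E < 0 := by linarith
    by_cases hA : 0 < A
    · refine ⟨A - E, C, A, hA, ?_, ?_⟩
      · rw [map_add, map_smul, map_smul, h1, h2]
        match_scalars <;> ring
      · rintro ⟨h', -⟩
        have hE : E < 0 := by nlinarith
        nlinarith [sub_eq_zero.1 h']
    · have hE : 0 < E := by nlinarith
      refine ⟨0, 1, E, hE, ?_, ?_⟩
      · rw [map_add, map_smul, map_smul, h1, h2]
        match_scalars <;> ring
      · rintro ⟨-, h'⟩
        norm_num at h'
  · set T := A + E with hT
    set disc := T ^ 2 - 4 * (A * E - B * C) with hdisc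
    have hdiscpos : 0 < disc := by nlinarith [sq_nonneg T]
    set s := Real.sqrt disc with hs
    have hs2 : s ^ 2 = disc := Real.sq_sqrt hdiscpos.le
    have hsnn : 0 ≤ s := Real.sqrt_nonneg _
    set μ := (T + s) / 2 with hμ
    have hμpos : 0 < μ := by
      have hT2 : T ^ 2 < s ^ 2 := by rw [hs2]; nlinarith
      have : -T < s := by nlinarith
      rw [hμ]; linarith
    have hchar : μ ^ 2 - T * μ + (A * E - B * C) = 0 := by
      rw [hμ]
      field_simp
      nlinarith [hs2]
    refine ⟨B, μ - A, μ, hμpos, ?_, fun h' => hB h'.1⟩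
    rw [map_add, map_smul, map_smul, h1, h2]
    match_scalars
    · ring
    · rw [hT] at hchar; nlinarith [hchar]

lemma det_ne {e₁ e₂ : V} (hind : LinearIndependent ℝ ![e₁, e₂]) (f : V ≃ₗ[ℝ] V)
    {A B C E : ℝ} (h1 : f e₁ = A • e₁ + C • e₂) (h2 : f e₂ = B • e₁ + E • e₂) :
    A * E - B * C ≠ 0 := by
  intro h0
  have hz : f (E • e₁ - C • e₂) = 0 := by
    rw [map_sub, map_smul, map_smul, h1, h2]
    match_scalars
    · linarith
    · ring
  have h3 : E • e₁ - C • e₂ = 0 := by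
    have := (LinearEquiv.map_eq_zero_iff f).1 hz
    exact this
  have h4 := pair_iff.1 hind E (-C) (by linear_combination (norm := module) h3)
  have hE : E = 0 := h4.1
  have hC : C = 0 := by have := h4.2; linarith
  have hz2 : f (B • e₁ - A • e₂) = 0 := by
    rw [map_sub, map_smul, map_smul, h1, h2]
    match_scalars
    · ring
    · rw [hE, hC]; ring
  have h5 : B • e₁ - A • e₂ = 0 := (LinearEquiv.map_eq_zero_iff f).1 hz2
  have h6 := pair_iff.1 hind B (-A) (by linear_combination (norm := module) h5)
  have hA : A = 0 := by have := h6.2; linarith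
  have he1 : f e₁ = 0 := by rw [h1, hA, hC]; simp
  exact ind_ne_zero₁ hind ((LinearEquiv.map_eq_zero_iff f).1 he1)

lemma commute_of_isHT (hD : IsRotationGroup D) (hdim : Module.finrank ℝ V = 3)
    {x : V} {h : V ≃ₗ[ℝ] V} (H : IsHT D x h) {g : V ≃ₗ[ℝ] V} (hg : g ∈ D)
    {l : ℝ} (hl : l ≠ 0) (hgx : g x = l • x) : ∀ z, g (h z) = h (g z) := by
  have hconj : IsHT D (l • x) (g * h * g⁻¹) := by
    have := isHT_conj hD H hg
    rwa [hgx] at this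
  have hconj' : IsHT D x (g * h * g⁻¹) := by
    have := isHT_smul hconj (σ := l⁻¹) (inv_ne_zero hl)
    rwa [smul_smul, inv_mul_cancel₀ hl, one_smul] at this
  have heq : g * h * g⁻¹ = h := isHT_unique hD hdim hconj' H
  intro z
  have := congrArg (fun (e : V ≃ₗ[ℝ] V) => e (g z)) heq
  simp only [mul_apply] at this
  rw [inv_apply_apply] at this
  exact this

/-- finrank of the (-1)-eigenspace of a half-turn is 2 -/
lemma ht_ker_finrank (hdim : Module.finrank ℝ V = 3) {x : V} {h : V ≃ₗ[ℝ] V}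
    (H : IsHT D x h) :
    Module.finrank ℝ (LinearMap.ker (h.toLinearMap + LinearMap.id)) = 2 := by
  haveI : FiniteDimensional ℝ V := .of_finrank_pos (by omega)
  set φ : V →ₗ[ℝ] V := h.toLinearMap + LinearMap.id with hφ
  have hφz : ∀ z, φ z = h z + z := fun z => rfl
  have hrange : LinearMap.range φ ≤ Submodule.span ℝ {x} := by
    rintro _ ⟨z, rfl⟩
    obtain ⟨t, ht⟩ := H.coeff z
    rw [hφz, ht]
    exact Submodule.smul_mem _ _ (Submodule.mem_span_singleton_self x)
  have hr1 : Module.finrank ℝ (LinearMap.range φ) = 1 := by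
    have hle : Module.finrank ℝ (LinearMap.range φ) ≤ 1 := by
      have := Submodule.finrank_mono hrange
      rwa [finrank_span_singleton H.ne] at this
    have hpos : 0 < Module.finrank ℝ (LinearMap.range φ) := by
      rw [Module.finrank_pos_iff]
      refine ⟨⟨φ x, ⟨x, rfl⟩⟩, 0, ?_⟩
      intro hc
      apply H.ne
      have : φ x = 0 := by
        have := congrArg (Subtype.val) hc
        simpa using this
      rw [hφz, H.fix] at this
      have h2x : (2 : ℝ) • x = 0 := by linear_combination (norm := module) this
      rcases smul_eq_zero.1 h2x with h' | h'
      · norm_num at h'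
      · exact h'
    omega
  have := LinearMap.finrank_range_add_finrank_ker φ
  rw [hr1, hdim] at this
  omega

/-- the (-1)-eigenspace of a half-turn admits two independent vectors spanning it -/
lemma ht_eigenspace (hdim : Module.finrank ℝ V = 3) {x : V} {h : V ≃ₗ[ℝ] V}
    (H : IsHT D x h) :
    ∃ e₁ e₂ : V, LinearIndependent ℝ ![e₁, e₂] ∧ h e₁ = -e₁ ∧ h e₂ = -e₂ ∧
      ∀ z : V, h z = -z → ∃ p q : ℝ, z = p • e₁ + q • e₂ := by
  haveI : FiniteDimensional ℝ V := .of_finrank_pos (by omega)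
  set φ : V →ₗ[ℝ] V := h.toLinearMap + LinearMap.id with hφ
  set K := LinearMap.ker φ with hK
  have hmemK : ∀ z : V, z ∈ K ↔ h z = -z := by
    intro z
    rw [hK, LinearMap.mem_ker]
    show h z + z = 0 ↔ _
    rw [← eq_neg_iff_add_eq_zero]
  have hK2 : Module.finrank ℝ K = 2 := ht_ker_finrank hdim H
  set B := Module.finBasisOfFinrankEq ℝ K hK2 with hB
  refine ⟨(B 0 : V), (B 1 : V), ?_, ?_, ?_, ?_⟩
  · have hli : LinearIndependent ℝ (K.subtype ∘ B) :=
      B.linearIndependent.map' K.subtype K.ker_subtype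
    have : ![((B 0 : K) : V), ((B 1 : K) : V)] = K.subtype ∘ B := by
      funext i
      fin_cases i <;> rfl
    rw [this]
    exact hli
  · exact (hmemK _).1 (B 0).2
  · exact (hmemK _).1 (B 1).2
  · intro z hz
    have hzK : z ∈ K := (hmemK z).2 hz
    have := B.sum_repr ⟨z, hzK⟩
    rw [Fin.sum_univ_two] at this
    refine ⟨B.repr ⟨z, hzK⟩ 0, B.repr ⟨z, hzK⟩ 1, ?_⟩
    have := congrArg (Subtype.val) this
    simp only [Submodule.coe_add, SetLike.val_smul] at this
    exact this.symm

/-- Claim S : an element of D which scales a nonzero vector has scale factor 1. -/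
lemma claimS (hD : IsRotationGroup D) (hdim : Module.finrank ℝ V = 3)
    {g : V ≃ₗ[ℝ] V} (hg : g ∈ D) {x : V} (hx : x ≠ 0) {l : ℝ}
    (hgx : g x = l • x) (hl : 0 < l) : l = 1 := by
  obtain ⟨h, H⟩ := isHT_exists hD hdim hx
  have hcomm := commute_of_isHT hD hdim H hg hl.ne' hgx
  obtain ⟨e₁, e₂, hindE, he₁, he₂, hspan⟩ := ht_eigenspace hdim H
  have he₁0 : e₁ ≠ 0 := ind_ne_zero₁ hindE
  have he₂0 : e₂ ≠ 0 := ind_ne_zero₂ hindE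
  -- g preserves the eigenspace
  have hprese : ∀ z, h z = -z → h (g z) = -(g z) := by
    intro z hz
    rw [← hcomm, hz, map_neg]
  obtain ⟨A, C, hAC⟩ := hspan _ (hprese e₁ he₁)
  obtain ⟨B, E, hBE⟩ := hspan _ (hprese e₂ he₂)
  have hΔ : A * E - B * C ≠ 0 := det_ne hindE g hAC hBE
  -- helper: any nonzero combination of e₁ e₂ gives independence with x
  have hcombo : ∀ p q : ℝ, ¬(p = 0 ∧ q = 0) → p • e₁ + q • e₂ ≠ 0 ∧
      h (p • e₁ + q • e₂) = -(p • e₁ + q • e₂) := by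
    intro p q hpq
    constructor
    · intro h0
      exact hpq (pair_iff.1 hindE p q h0)
    · rw [map_add, map_smul, map_smul, he₁, he₂]
      module
  rcases hΔ.lt_or_gt with hneg | hpos
  · obtain ⟨p, q, μ, hμ, hfy, hpq⟩ := eig2 hindE g hAC hBE hneg
    obtain ⟨hy0, hhy⟩ := hcombo p q hpq
    have hind2 : LinearIndependent ℝ ![x, p • e₁ + q • e₂] :=
      ind_of_fix_neg hx hy0 H.fix hhy
    have : g = 1 := by
      refine flag_rigid hD hind2 hg (σ := l) (μ := μ) (t := 0) hl hμ hgx ?_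
      rw [hfy, zero_smul, add_zero]
    rw [this] at hgx
    exact (smul_coeff_inj hx (s := (1:ℝ)) (by rw [one_smul, ← hgx]; rfl)).symm
  · -- compose with a half-turn about e₁ to get negative determinant
    obtain ⟨k, K1⟩ := isHT_exists hD hdim he₁0
    have hkx : k x = -x := perp_symm hD hdim H K1 he₁
    obtain ⟨t, hte⟩ := K1.coeff e₂
    have hke₂ : k e₂ = t • e₁ - e₂ := by rw [← hte]; abel
    set w := g * k with hw
    have hwx : w x = (-l) • x := by
      rw [hw, mul_apply, hkx, map_neg, hgx]; module
    have hwe₁ : w e₁ = A • e₁ + C • e₂ := by rw [hw, mul_apply, K1.fix, hAC]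
    have hwe₂ : w e₂ = (t * A - B) • e₁ + (t * C - E) • e₂ := by
      rw [hw, mul_apply, hke₂, map_sub, map_smul, hAC, hBE]
      module
    have hdetw : A * (t * C - E) - (t * A - B) * C < 0 := by nlinarith
    obtain ⟨p, q, μ, hμ, hfy, hpq⟩ := eig2 hindE w hwe₁ hwe₂ hdetw
    obtain ⟨hy0, hhy⟩ := hcombo p q hpq
    set y := p • e₁ + q • e₂ with hy
    have hind2 : LinearIndependent ℝ ![x, y] := ind_of_fix_neg hx hy0 H.fix hhy
    have hwwx : (w * w) x = (l * l) • x := by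
      rw [mul_apply, hwx, map_smul, hwx]
      module
    have hwwy : (w * w) y = (μ * μ) • y := by
      rw [mul_apply, hfy, map_smul, hfy, smul_smul]
    have hww1 : w * w = 1 := by
      refine flag_rigid hD hind2 (mul_mem (mul_mem hg K1.mem) (mul_mem hg K1.mem))
        (σ := l * l) (μ := μ * μ) (t := 0) (mul_pos hl hl) (mul_pos hμ hμ) hwwx ?_
      rw [hwwy, zero_smul, add_zero]
    have : (l * l) • x = x := by rw [← hwwx, hww1]; rfl
    have hll : l * l = 1 := smul_coeff_inj hx (t := (1:ℝ)) (by rw [this, one_smul])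
    nlinarith

lemma pair_coeff {v w : V} (hvw : LinearIndependent ℝ ![v, w]) {p q p' q' : ℝ}
    (h : p • v + q • w = p' • v + q' • w) : p = p' ∧ q = q' := by
  have := pair_iff.1 hvw (p - p') (q - q') (by linear_combination (norm := module) h)
  constructor
  · linarith [this.1]
  · linarith [this.2]

/-- every (-1)-eigenvector of a half-turn lies in the plane of two given independent ones -/
lemma isHT_minus_plane (hdim : Module.finrank ℝ V = 3) {x : V} {h : V ≃ₗ[ℝ] V}
    (H : IsHT D x h) {v w : V} (hvw : LinearIndependent ℝ ![v, w])
    (hv : h v = -v) (hw : h w = -w) : ∀ u : V, h u = -u → ∃ p q : ℝ, u = p • v + q • w := by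
  haveI : FiniteDimensional ℝ V := .of_finrank_pos (by omega)
  intro u hu
  set φ : V →ₗ[ℝ] V := h.toLinearMap + LinearMap.id with hφ
  set K := LinearMap.ker φ with hK
  have hmemK : ∀ z : V, z ∈ K ↔ h z = -z := by
    intro z
    rw [hK, LinearMap.mem_ker]
    show h z + z = 0 ↔ _
    rw [← eq_neg_iff_add_eq_zero]
  have hK2 : Module.finrank ℝ K = 2 := ht_ker_finrank hdim H
  have hle : Submodule.span ℝ {v, w} ≤ K := by
    rw [Submodule.span_le]
    intro y hy
    rcases Set.mem_insert_iff.1 hy with h' | h'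
    · rw [h']; exact (hmemK v).2 hv
    · rw [Set.mem_singleton_iff.1 h']; exact (hmemK w).2 hw
  have hsp2 : Module.finrank ℝ (Submodule.span ℝ {v, w} : Submodule ℝ V) = 2 := by
    have hr : Set.range ![v, w] = {v, w} := by
      ext y
      simp only [Matrix.range_cons, Matrix.range_empty, Set.mem_insert_iff,
        Set.mem_singleton_iff, Set.union_empty, Set.union_singleton, Set.mem_setOf_eq]
      tauto
    have := finrank_span_eq_card hvw
    rw [hr] at this
    rw [this]
    simp
  have heq : Submodule.span ℝ {v, w} = K := by
    apply Submodule.eq_of_le_of_finrank_le hle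
    rw [hsp2, hK2]
  have : u ∈ Submodule.span ℝ {v, w} := by rw [heq]; exact (hmemK u).2 hu
  obtain ⟨p, q, hpq⟩ := Submodule.mem_span_pair.1 this
  exact ⟨p, q, hpq.symm⟩

/-- uniqueness of the scale factor taking x to the ray of n -/
lemma norm_unique (hD : IsRotationGroup D) (hdim : Module.finrank ℝ V = 3)
    {n : V} (hn : n ≠ 0) {d d' : V ≃ₗ[ℝ] V} (hd : d ∈ D) (hd' : d' ∈ D)
    {x : V} {τ τ' : ℝ} (hτ : 0 < τ) (hτ' : 0 < τ')
    (h1 : d x = τ • n) (h2 : d' x = τ' • n) : τ = τ' := by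
  set g := d' * d⁻¹ with hg
  have hgmem : g ∈ D := mul_mem hd' (inv_mem hd)
  have hgn : g n = (τ⁻¹ * τ') • n := by
    have e1 : g (τ • n) = τ' • n := by
      rw [hg, mul_apply, ← h1, inv_apply_apply, h2]
    have e2 : g n = τ⁻¹ • g (τ • n) := by
      rw [← map_smul, smul_smul, inv_mul_cancel₀ hτ.ne', one_smul]
    rw [e2, e1, smul_smul]
  have := claimS hD hdim hgmem hn hgn (by positivity)
  have hττ : τ⁻¹ * τ' = 1 := this
  field_simp at hττ
  linarith

set_option maxHeartbeats 2000000 in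
/-- The key similar-triangles identity. -/

lemma key (hD : IsRotationGroup D) (hdim : Module.finrank ℝ V = 3)
    {n : V} (hn : n ≠ 0) {v w : V} (hvw : LinearIndependent ℝ ![v, w])
    {r : V ≃ₗ[ℝ] V} (Hr : IsHT D v r) (hrw : r w = -w)
    {hs : V ≃ₗ[ℝ] V} (Hs : IsHT D (v + w) hs) {γ : ℝ} (hγ : hs v + v = γ • (v + w))
    {dv ds : V ≃ₗ[ℝ] V} (hdv : dv ∈ D) (hds : ds ∈ D)
    {a c : ℝ} (ha : 0 < a) (hc : 0 < c)
    (hdva : dv v = a • n) (hdsc : ds (v + w) = c • n) :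
    γ * c ^ 2 = 2 * a ^ 2 := by
  haveI : FiniteDimensional ℝ V := .of_finrank_pos (by omega)
  have hv0 : v ≠ 0 := ind_ne_zero₁ hvw
  have hw0 : w ≠ 0 := ind_ne_zero₂ hvw
  have hs0 : v + w ≠ 0 := by
    intro h0
    have := (pair_iff.1 hvw 1 1 (by rw [one_smul, one_smul]; exact h0)).1
    norm_num at this
  -- find z perpendicular to both v and v + w
  set Kr := LinearMap.ker (r.toLinearMap + LinearMap.id) with hKr
  set Ks := LinearMap.ker (hs.toLinearMap + LinearMap.id) with hKs
  have hmemKr : ∀ y : V, y ∈ Kr ↔ r y = -y := by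
    intro y
    rw [hKr, LinearMap.mem_ker]
    show r y + y = 0 ↔ _
    rw [← eq_neg_iff_add_eq_zero]
  have hmemKs : ∀ y : V, y ∈ Ks ↔ hs y = -y := by
    intro y
    rw [hKs, LinearMap.mem_ker]
    show hs y + y = 0 ↔ _
    rw [← eq_neg_iff_add_eq_zero]
  have hKr2 : Module.finrank ℝ Kr = 2 := ht_ker_finrank hdim Hr
  have hKs2 : Module.finrank ℝ Ks = 2 := ht_ker_finrank hdim Hs
  have hinf : 0 < Module.finrank ℝ (Kr ⊓ Ks : Submodule ℝ V) := by
    have h1 := Submodule.finrank_sup_add_finrank_inf_eq Kr Ks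
    have h2 : Module.finrank ℝ (Kr ⊔ Ks : Submodule ℝ V) ≤ 3 := by
      rw [← hdim]
      exact Submodule.finrank_le _
    omega
  obtain ⟨z0, hz0ne⟩ : ∃ z0 : (Kr ⊓ Ks : Submodule ℝ V), z0 ≠ 0 := by
    haveI := Module.finrank_pos_iff.1 hinf
    exact exists_ne 0
  set z : V := (z0 : V) with hzdef
  have hz0 : z ≠ 0 := fun h0 => hz0ne (by rwa [hzdef, Submodule.coe_eq_zero] at h0)
  have hrz : r z = -z := (hmemKr z).1 z0.2.1
  have hsz : hs z = -z := (hmemKs z).1 z0.2.2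
  -- half-turn about z
  obtain ⟨hz, Hz⟩ := isHT_exists hD hdim hz0
  have hzv : hz v = -v := perp_symm hD hdim Hr Hz hrz
  have hzs : hz (v + w) = -(v + w) := perp_symm hD hdim Hs Hz hsz
  have hzw : hz w = -w := by
    have : hz w = hz (v + w) - hz v := by rw [← map_sub]; congr 1; abel
    rw [this, hzs, hzv]
    abel
  have hplane := isHT_minus_plane hdim Hz hvw hzv hzw
  -- independence statements
  have hindzs : LinearIndependent ℝ ![z, v + w] := ind_of_fix_neg hz0 hs0 Hz.fix hzs
  have hindzv : LinearIndependent ℝ ![z, v] := ind_of_fix_neg hz0 hv0 Hz.fix hzv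
  -- the rotation about z taking the ray of v+w to the ray of v
  obtain ⟨e, ⟨hemem, heH, heR⟩, -⟩ := hD z (v + w) z v hindzs hindzv
  have hez : e z = z := by
    have hmem : e z ∈ Ray' z := by
      rw [← heR]; exact Set.mem_image_of_mem _ (mem_ray_self z)
    obtain ⟨τ, hτ0, hτ⟩ := hmem
    have hτpos : 0 < τ := by
      rcases hτ0.lt_or_eq with h' | h'
      · exact h'
      · exfalso
        apply hz0
        have : e z = 0 := by rw [hτ, ← h', zero_smul]
        exact (LinearEquiv.map_eq_zero_iff e).1 this
    have hτ1 : τ = 1 := claimS hD hdim hemem hz0 hτ hτpos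
    rw [hτ, hτ1, one_smul]
  have hecomm := commute_of_isHT hD hdim Hz hemem one_ne_zero (by rw [hez, one_smul])
  -- e (v+w) = β • v with β > 0
  obtain ⟨α, β, hβ0, hβ⟩ : e (v + w) ∈ HalfPlane z v := by
    rw [← heH]; exact Set.mem_image_of_mem _ (mem_halfPlane_self₂ z (v + w))
  have hα0 : α = 0 := by
    have h1 : hz (e (v + w)) = -(e (v + w)) := by
      rw [← hecomm, hzs, map_neg]
    rw [hβ, map_add, map_smul, map_smul, Hz.fix, hzv] at h1
    have h2 : (2 * α) • z + (0 : ℝ) • v = 0 := by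
      linear_combination (norm := module) h1
    have := (pair_iff.1 hindzv (2 * α) 0 h2).1
    linarith
  have hesv : e (v + w) = β • v := by rw [hβ, hα0, zero_smul, zero_add]
  have hβpos : 0 < β := by
    rcases hβ0.lt_or_eq with h' | h'
    · exact h'
    · exfalso
      apply hs0
      have : e (v + w) = 0 := by rw [hesv, ← h', zero_smul]
      exact (LinearEquiv.map_eq_zero_iff e).1 this
  -- e preserves the plane span{v, w}
  have hepres : ∀ u : V, hz u = -u → hz (e u) = -(e u) := by
    intro u hu
    rw [← hecomm, hu, map_neg]
  obtain ⟨P, Q, hPQ⟩ := hplane (e v) (hepres v hzv)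
  obtain ⟨P', Q', hPQ'⟩ := hplane (e w) (hepres w hzw)
  -- relation from e (v+w) = β v
  have hsum : P + P' = β ∧ Q + Q' = 0 := by
    have h1 : e v + e w = β • v := by rw [← map_add, hesv]
    rw [hPQ, hPQ'] at h1
    exact pair_coeff hvw (by linear_combination (norm := module) h1)
  -- determinant of e on the plane is positive
  have hΔ : P * Q' - P' * Q ≠ 0 := det_ne hvw e hPQ hPQ'
  have hΔpos : 0 < P * Q' - P' * Q := by
    rcases hΔ.lt_or_gt with hneg | hpos
    · exfalso
      obtain ⟨p, q, μ, hμ, hfy, hpq⟩ := eig2 hvw e hPQ hPQ' hneg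
      set y := p • v + q • w with hy
      have hy0 : y ≠ 0 := fun h0 => hpq (pair_iff.1 hvw p q h0)
      have hzy : hz y = -y := by
        rw [hy, map_add, map_smul, map_smul, hzv, hzw]
        module
      have hindzy : LinearIndependent ℝ ![z, y] := ind_of_fix_neg hz0 hy0 Hz.fix hzy
      have he1 : e = 1 := by
        refine flag_rigid hD hindzy hemem (σ := 1) (μ := μ) (t := 0) one_pos hμ ?_ ?_
        · rw [hez, one_smul]
        · rw [hfy, zero_smul, add_zero]
      have : v + w = β • v := by rw [← hesv, he1]; rfl
      have := (pair_iff.1 hvw (1 - β) 1 (by linear_combination (norm := module) this)).2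
      norm_num at this
    · exact hpos
  -- the bisector candidate k = e ∘ hs
  set k := e * hs with hk
  have hkmem : k ∈ D := mul_mem hemem Hs.mem
  have hkz : k z = -z := by rw [hk, mul_apply, hsz, map_neg, hez]
  have hks : k (v + w) = β • v := by rw [hk, mul_apply, Hs.fix, hesv]
  -- hs on the plane
  have hsv : hs v = (γ - 1) • v + γ • w := by
    have : hs v = γ • (v + w) - v := by rw [← hγ]; abel
    rw [this]
    module
  have hsw : hs w = (2 - γ) • v + (1 - γ) • w := by
    have h1 : hs w = hs (v + w) - hs v := by rw [← map_sub]; congr 1; abel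
    rw [h1, Hs.fix, hsv]
    module
  -- k on the plane
  have hkv : k v = ((γ - 1) * P + γ * P') • v + ((γ - 1) * Q + γ * Q') • w := by
    rw [hk, mul_apply, hsv, map_add, map_smul, map_smul, hPQ, hPQ']
    module
  have hkw : k w = ((2 - γ) * P + (1 - γ) * P') • v + ((2 - γ) * Q + (1 - γ) * Q') • w := by
    rw [hk, mul_apply, hsw, map_add, map_smul, map_smul, hPQ, hPQ']
    module
  have hdetk : ((γ - 1) * P + γ * P') * ((2 - γ) * Q + (1 - γ) * Q') -
      ((2 - γ) * P + (1 - γ) * P') * ((γ - 1) * Q + γ * Q') < 0 := by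
    have : ((γ - 1) * P + γ * P') * ((2 - γ) * Q + (1 - γ) * Q') -
        ((2 - γ) * P + (1 - γ) * P') * ((γ - 1) * Q + γ * Q') = -(P * Q' - P' * Q) := by
      ring
    rw [this]
    linarith
  obtain ⟨p, q, μ, hμ, hky, hpq⟩ := eig2 hvw k hkv hkw hdetk
  set y := p • v + q • w with hy
  have hy0 : y ≠ 0 := fun h0 => hpq (pair_iff.1 hvw p q h0)
  have hzy : hz y = -y := by
    rw [hy, map_add, map_smul, map_smul, hzv, hzw]
    module
  have hindzy : LinearIndependent ℝ ![z, y] := ind_of_fix_neg hz0 hy0 Hz.fix hzy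
  have hindyz : LinearIndependent ℝ ![y, z] := ind_swap hindzy
  -- k is an involution
  have hkk : k * k = 1 := by
    refine flag_rigid hD hindyz (mul_mem hkmem hkmem) (σ := μ * μ) (μ := 1) (t := 0)
      (mul_pos hμ hμ) one_pos ?_ ?_
    · rw [mul_apply, hky, map_smul, hky, smul_smul]
    · rw [mul_apply, hkz, map_neg, hkz, neg_neg, one_smul, zero_smul, add_zero]
  have hkne : k ≠ 1 := by
    intro h1
    rw [h1] at hkz
    have h2 : (2 : ℝ) • z = 0 := by
      have : z = -z := hkz
      linear_combination (norm := module) this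
    rcases smul_eq_zero.1 h2 with h' | h'
    · norm_num at h'
    · exact hz0 h'
  have hμ1 : μ = 1 := by
    have h1 : (k * k) y = (μ * μ) • y := by rw [mul_apply, hky, map_smul, hky, smul_smul]
    have h2 : (μ * μ) • y = (1 : ℝ) • y := by rw [one_smul, ← h1, hkk]; rfl
    have := smul_coeff_inj hy0 h2
    nlinarith
  have hkfix : k y = y := by rw [hky, hμ1, one_smul]
  have K2 : IsHT D y k := isHT_of_inv hD hkmem hkk hkne hy0 hkfix
  -- k v = β⁻¹ (v + w)
  have hkv2 : k v = β⁻¹ • (v + w) := by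
    have h1 : k (k (v + w)) = v + w := K2.apply_apply (v + w)
    rw [hks, map_smul] at h1
    have h2 : k v = β⁻¹ • (β • k v) := by
      rw [smul_smul, inv_mul_cancel₀ hβpos.ne', one_smul]
    rw [h2, h1]
  -- conjugation : k * r * k = hs
  have hconj : k * r * k⁻¹ = hs := by
    have h1 : IsHT D (k v) (k * r * k⁻¹) := isHT_conj hD Hr K2.mem
    rw [hkv2] at h1
    have h2 : IsHT D (β • β⁻¹ • (v + w)) (k * r * k⁻¹) := isHT_smul h1 hβpos.ne'
    rw [smul_smul, mul_inv_cancel₀ hβpos.ne', one_smul] at h2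
    exact isHT_unique hD hdim h2 Hs
  -- hs (k w) = -(k w)
  have hskw : hs (k w) = -(k w) := by
    have h1 : (k * r * k⁻¹) (k w) = k (r w) := by
      rw [mul_apply, mul_apply, inv_apply_apply]
    rw [hconj] at h1
    rw [h1, hrw, map_neg]
  -- coordinates of k w
  have hkw2 : k w = (β - β⁻¹) • v + (-β⁻¹) • w := by
    have h1 : k w = k (v + w) - k v := by rw [← map_sub]; congr 1; abel
    rw [h1, hks, hkv2]
    module
  -- final computation
  have hfin : hs (k w) = ((β - β⁻¹) * (γ - 1) + (-β⁻¹) * (2 - γ)) • v +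
      ((β - β⁻¹) * γ + (-β⁻¹) * (1 - γ)) • w := by
    rw [hkw2, map_add, map_smul, map_smul, hsv, hsw]
    module
  have hneg : -(k w) = (-(β - β⁻¹)) • v + β⁻¹ • w := by
    rw [hkw2]
    module
  have hco := pair_coeff hvw (by rw [← hfin, ← hneg, hskw] :
    ((β - β⁻¹) * (γ - 1) + (-β⁻¹) * (2 - γ)) • v + ((β - β⁻¹) * γ + (-β⁻¹) * (1 - γ)) • w
      = (-(β - β⁻¹)) • v + β⁻¹ • w)
  have hγβ : γ * β ^ 2 = 2 := by
    have h2 := hco.2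
    have hβne : β ≠ 0 := hβpos.ne'
    field_simp at h2
    nlinarith [h2]
  -- identify β = c / a
  have hβca : β * a = c := by
    set g2 := dv * k * ds⁻¹ with hg2
    have hg2mem : g2 ∈ D := mul_mem (mul_mem hdv hkmem) (inv_mem hds)
    have h1 : g2 (c • n) = (β * a) • n := by
      rw [hg2, mul_apply, mul_apply, ← hdsc, inv_apply_apply, hks, map_smul, hdva]
      rw [smul_smul]
    have h2 : g2 n = (c⁻¹ * (β * a)) • n := by
      have e2 : g2 n = c⁻¹ • g2 (c • n) := by
        rw [← map_smul, smul_smul, inv_mul_cancel₀ hc.ne', one_smul]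
      rw [e2, h1, smul_smul]
    have h3 := claimS hD hdim hg2mem hn h2 (by positivity)
    have : c⁻¹ * (β * a) = 1 := h3
    field_simp at this
    linarith
  -- conclude
  have hβval : β = c / a := by
    field_simp
    linarith
  rw [hβval] at hγβ
  have hane : a ≠ 0 := ha.ne'
  field_simp at hγβ
  nlinarith [hγβ]

/-- an element of D fixing v and negating w (independent) is the half-turn about v -/
lemma isHT_of_flag (hD : IsRotationGroup D) (hdim : Module.finrank ℝ V = 3)
    {v w : V} (hvw : LinearIndependent ℝ ![v, w]) {r : V ≃ₗ[ℝ] V}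
    (hr : r ∈ D) (hrv : r v = v) (hrw : r w = -w) : IsHT D v r := by
  have hv0 : v ≠ 0 := ind_ne_zero₁ hvw
  obtain ⟨h, H⟩ := isHT_exists hD hdim hv0
  obtain ⟨u, -, hu⟩ := hD v w v (-w) hvw (ind_neg₂ hvw)
  have hru : r = u := by
    apply hu
    refine ⟨hr, ?_, ?_⟩
    · rw [image_HalfPlane, hrv, hrw]
    · rw [image_Ray, hrv]
  have hhu : h = u := by
    apply hu
    obtain ⟨t, ht⟩ := H.coeff w
    have hhw : h w = (1:ℝ) • (-w) + t • v := by
      have : h w = t • v - w := by rw [← ht]; abel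
      rw [this]; module
    refine ⟨H.mem, ?_, ?_⟩
    · rw [image_HalfPlane, hhw, show h v = (1:ℝ) • v by rw [H.fix, one_smul],
        halfPlane_eq one_ne_zero one_pos]
    · rw [image_Ray, H.fix]
  rw [hru, ← hhu]
  exact H

lemma scale_zero {n : V} (hn : n ≠ 0) {d : V ≃ₗ[ℝ] V} {x : V} {a : ℝ}
    (hd : d x = a • n) (hx : x = 0) : a = 0 := by
  rw [hx, map_zero] at hd
  rcases smul_eq_zero.1 hd.symm with h' | h'
  · exact h'
  · exact absurd h' hn

lemma scale_pos {n : V} (hn : n ≠ 0) {d : V ≃ₗ[ℝ] V} {x : V} {a : ℝ}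
    (hd : d x = a • n) (ha : 0 ≤ a) (hx : x ≠ 0) : 0 < a := by
  rcases ha.lt_or_eq with h' | h'
  · exact h'
  · exfalso
    apply hx
    rw [← h', zero_smul] at hd
    exact (LinearEquiv.map_eq_zero_iff d).1 hd

theorem stmt16' {V : Type*} [AddCommGroup V] [Module ℝ V]
    (hdim : Module.finrank ℝ V = 3)
    (D : Subgroup (V ≃ₗ[ℝ] V)) (hD : IsRotationGroup D)
    (v w : V) (hperp : ∃ r : V ≃ₗ[ℝ] V, r ∈ D ∧ r v = v ∧ r w = -w)
    (n : V) (hn : n ≠ 0) (a b c : ℝ)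
    (ha : 0 ≤ a) (hb : 0 ≤ b) (hc : 0 ≤ c)
    (dv : V ≃ₗ[ℝ] V) (hdv : dv ∈ D) (hdva : dv v = a • n)
    (dw : V ≃ₗ[ℝ] V) (hdw : dw ∈ D) (hdwb : dw w = b • n)
    (ds : V ≃ₗ[ℝ] V) (hds : ds ∈ D) (hdsc : ds (v + w) = c • n) :
    a ^ 2 + b ^ 2 = c ^ 2 := by
  haveI : FiniteDimensional ℝ V := .of_finrank_pos (by omega)
  obtain ⟨r, hrD, hrv, hrw⟩ := hperp
  by_cases hv0 : v = 0
  · have ha0 : a = 0 := scale_zero hn hdva hv0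
    by_cases hw0 : w = 0
    · have hb0 : b = 0 := scale_zero hn hdwb hw0
      have hc0 : c = 0 := scale_zero hn hdsc (by rw [hv0, hw0, add_zero])
      rw [ha0, hb0, hc0]
      ring
    · have hbpos : 0 < b := scale_pos hn hdwb hb hw0
      have hdsc' : ds w = c • n := by rw [← hdsc, hv0, zero_add]
      have hcpos : 0 < c := scale_pos hn hdsc' hc hw0
      have hbc : b = c := norm_unique hD hdim hn hdw hds hbpos hcpos hdwb hdsc'
      rw [ha0, hbc]
      ring
  · by_cases hw0 : w = 0
    · have hb0 : b = 0 := scale_zero hn hdwb hw0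
      have hapos : 0 < a := scale_pos hn hdva ha hv0
      have hdsc' : ds v = c • n := by rw [← hdsc, hw0, add_zero]
      have hcpos : 0 < c := scale_pos hn hdsc' hc hv0
      have hac : a = c := norm_unique hD hdim hn hdv hds hapos hcpos hdva hdsc'
      rw [hb0, hac]
      ring
    · -- main case
      have hvw : LinearIndependent ℝ ![v, w] := by
        refine pair_iff.2 fun s t hst => ?_
        have h2 : s • v - t • w = 0 := by
          have := congrArg r hst
          rw [map_add, map_smul, map_smul, hrv, hrw, map_zero] at this
          linear_combination (norm := module) this
        have hsv : s • v = 0 := by linear_combination (norm := module) (1/2 : ℝ) • (hst + h2)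
        have htw : t • w = 0 := by linear_combination (norm := module) hst - hsv
        constructor
        · rcases smul_eq_zero.1 hsv with h' | h'
          · exact h'
          · exact absurd h' hv0
        · rcases smul_eq_zero.1 htw with h' | h'
          · exact h'
          · exact absurd h' hw0
      have hs0 : v + w ≠ 0 := by
        intro h0
        have := (pair_iff.1 hvw 1 1 (by rw [one_smul, one_smul]; exact h0)).1
        norm_num at this
      have hapos : 0 < a := scale_pos hn hdva ha hv0
      have hbpos : 0 < b := scale_pos hn hdwb hb hw0
      have hcpos : 0 < c := scale_pos hn hdsc hc hs0
      have Hr : IsHT D v r := isHT_of_flag hD hdim hvw hrD hrv hrw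
      obtain ⟨kw, Kw⟩ := isHT_exists hD hdim hw0
      have hkwv : kw v = -v := perp_symm hD hdim Hr Kw hrw
      obtain ⟨hs, Hs⟩ := isHT_exists hD hdim hs0
      obtain ⟨γ, hγ⟩ := Hs.coeff v
      obtain ⟨δ, hδ⟩ := Hs.coeff w
      have hγδ : γ + δ = 2 := by
        have h3 : hs v + hs w = v + w := by rw [← map_add]; exact Hs.fix
        have h4 : (γ + δ) • (v + w) = (2:ℝ) • (v + w) := by
          linear_combination (norm := module) h3 - hγ - hδ
        exact smul_coeff_inj hs0 h4
      have key₁ : γ * c ^ 2 = 2 * a ^ 2 :=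
        key hD hdim hn hvw Hr hrw Hs hγ hdv hds hapos hcpos hdva hdsc
      have Hs' : IsHT D (w + v) hs := by rwa [add_comm]
      have hδ' : hs w + w = δ • (w + v) := by rwa [add_comm v w] at hδ
      have hdsc'' : ds (w + v) = c • n := by rwa [add_comm v w] at hdsc
      have key₂ : δ * c ^ 2 = 2 * b ^ 2 :=
        key hD hdim hn (ind_swap hvw) Kw hkwv Hs' hδ' hdw hds hbpos hcpos hdwb hdsc''
      nlinarith [key₁, key₂, hγδ]


end RotPyth

theorem stmt16 {V : Type*} [AddCommGroup V] [Module ℝ V]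
    (hdim : Module.finrank ℝ V = 3)
    (D : Subgroup (V ≃ₗ[ℝ] V)) (hD : IsRotationGroup D)
    (v w : V) (hperp : ∃ r : V ≃ₗ[ℝ] V, r ∈ D ∧ r v = v ∧ r w = -w)
    (n : V) (hn : n ≠ 0) (a b c : ℝ)
    (ha : 0 ≤ a) (hb : 0 ≤ b) (hc : 0 ≤ c)
    (dv : V ≃ₗ[ℝ] V) (hdv : dv ∈ D) (hdva : dv v = a • n)
    (dw : V ≃ₗ[ℝ] V) (hdw : dw ∈ D) (hdwb : dw w = b • n)
    (ds : V ≃ₗ[ℝ] V) (hds : ds ∈ D) (hdsc : ds (v + w) = c • n) :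
    a ^ 2 + b ^ 2 = c ^ 2 := by
  exact RotPyth.stmt16' hdim D hD v w hperp n hn a b c ha hb hc dv hdv hdva dw hdw hdwb ds hds hdsc
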